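/- Let d ≥ 1, let b be a real number with b > (d−1)/2, and let k be a positive integer. Let î(k) denote the lexicographically smallest partition of k into not more than d parts. Then 0 < (b)_{î(k)} ≤ (b)_ι for every partition ι of k into not more than d parts, and the inequality is strict whenever ι ≠ î(k). -/

import Mathlib

/-- `ι : Fin d → ℕ` is a partition of `k` into not more than `d` parts:
its parts are nonincreasing and sum to `k`. -/
def IsPartitionOf (d k : ℕ) (ι : Fin d → ℕ) : Prop :=
  Antitone ι ∧ ∑ j, ι j = k

/-- Strict lexicographic order on tuples: `ι` is lexicographically smaller than `ι'`. -/
def LexLt {d : ℕ} (ι ι' : Fin d → ℕ) : Prop :=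
  ∃ i : Fin d, ι i < ι' i ∧ ∀ j : Fin d, j < i → ι j = ι' j

/-- `ι` is the lexicographically smallest partition of `k` into not more than `d` parts. -/
def IsSmallestPartition (d k : ℕ) (ι : Fin d → ℕ) : Prop :=
  IsPartitionOf d k ι ∧ ∀ ι' : Fin d → ℕ, IsPartitionOf d k ι' → ι' ≠ ι → LexLt ι ι'

/-- The generalized hypergeometric coefficient `(b)_ι = ∏_{j=1}^d (b - (j-1)/2)_{k_j}`,
where `(a)_m` is the rising factorial (with `0`-based indexing for `Fin d`). -/
noncomputable def hgCoeff (d : ℕ) (b : ℝ) (ι : Fin d → ℕ) : ℝ :=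
  ∏ j : Fin d, (ascPochhammer ℝ (ι j)).eval (b - (j : ℕ) / 2)

lemma base_pos (d : ℕ) (b : ℝ) (hb : ((d : ℝ) - 1) / 2 < b) (t : Fin d) :
    (0 : ℝ) < b - (t : ℕ) / 2 := by
  have h1 : (t : ℕ) + 1 ≤ d := t.isLt
  have h2 : ((t : ℕ) : ℝ) + 1 ≤ (d : ℝ) := by exact_mod_cast h1
  linarith

lemma hgCoeff_pos (d : ℕ) (b : ℝ) (hb : ((d : ℝ) - 1) / 2 < b) (ι : Fin d → ℕ) :
    0 < hgCoeff d b ι := by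
  apply Finset.prod_pos
  intro t _
  exact ascPochhammer_pos _ _ (base_pos d b hb t)

set_option maxHeartbeats 1000000 in
lemma move_lemma (d : ℕ) (hd : 1 ≤ d) (b : ℝ) (hb : ((d : ℝ) - 1) / 2 < b) (k : ℕ)
    (ι : Fin d → ℕ) (hι : IsPartitionOf d k ι)
    (hgap : ι ⟨d - 1, by omega⟩ + 2 ≤ ι ⟨0, by omega⟩) :
    ∃ ι' : Fin d → ℕ, IsPartitionOf d k ι' ∧
      (∑ t, (ι' t) ^ 2) < (∑ t, (ι t) ^ 2) ∧ hgCoeff d b ι' < hgCoeff d b ι := by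
  classical
  obtain ⟨hanti, hsum⟩ := hι
  set z : Fin d := ⟨0, by omega⟩ with hz
  set w : Fin d := ⟨d - 1, by omega⟩ with hw
  have hgap' : ι w + 2 ≤ ι z := hgap
  have hle_all : ∀ t : Fin d, ι t ≤ ι z := fun t => hanti (by simp [hz, Fin.le_def])
  have hge_all : ∀ t : Fin d, ι w ≤ ι t := fun t => hanti (by
    simp only [hw, Fin.le_def]; omega)
  set S : Finset (Fin d) := Finset.univ.filter (fun t => ι t = ι z) with hS
  set T : Finset (Fin d) := Finset.univ.filter (fun t => ι t = ι w) with hT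
  have hzS : z ∈ S := by simp [hS]
  have hwT : w ∈ T := by simp [hT]
  set i : Fin d := S.max' ⟨z, hzS⟩ with hi_def
  set j : Fin d := T.min' ⟨w, hwT⟩ with hj_def
  have hiS : i ∈ S := Finset.max'_mem _ _
  have hjT : j ∈ T := Finset.min'_mem _ _
  have hi : ι i = ι z := (Finset.mem_filter.mp hiS).2
  have hj : ι j = ι w := (Finset.mem_filter.mp hjT).2
  have hij : i < j := by
    rcases lt_trichotomy i j with h | h | h
    · exact h
    · rw [h] at hi; omega
    · have := hanti h.le
      omega
  have hlt_i : ∀ t : Fin d, i < t → ι t < ι z := by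
    intro t ht
    rcases lt_or_eq_of_le (hle_all t) with h | h
    · exact h
    · have : t ∈ S := by simp [hS, h]
      have := Finset.le_max' S t this
      exact absurd ht (not_lt.mpr this)
  have hgt_j : ∀ t : Fin d, t < j → ι w < ι t := by
    intro t ht
    rcases lt_or_eq_of_le (hge_all t) with h | h
    · exact h
    · have : t ∈ T := by simp [hT, ← h]
      have := Finset.min'_le T t this
      exact absurd ht (not_lt.mpr this)
  set ι' : Fin d → ℕ :=
    Function.update (Function.update ι i (ι i - 1)) j (ι j + 1) with hι'
  have hij' : i ≠ j := hij.ne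
  have hval_j : ι' j = ι j + 1 := by simp [hι']
  have hval_i : ι' i = ι i - 1 := by
    simp [hι', Function.update_of_ne hij']
  have hval_other : ∀ t : Fin d, t ≠ i → t ≠ j → ι' t = ι t := by
    intro t hti htj
    simp [hι', Function.update_of_ne htj, Function.update_of_ne hti]
  -- antitone
  have hanti' : Antitone ι' := by
    intro s t hst
    rcases eq_or_ne s t with rfl | hne
    · exact le_refl _
    have hst' : s < t := lt_of_le_of_ne hst hne
    by_cases hti : t = i
    · subst hti
      have hsi : s ≠ i := hst'.ne
      have hsj : s ≠ j := (hst'.trans hij).ne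
      rw [hval_i, hval_other s hsi hsj]
      have := hanti hst'.le
      omega
    by_cases htj : t = j
    · subst htj
      rw [hval_j]
      by_cases hsi : s = i
      · subst hsi
        rw [hval_i]
        omega
      · rw [hval_other s hsi hst'.ne]
        have := hgt_j s hst'
        omega
    rw [hval_other t hti htj]
    by_cases hsi : s = i
    · subst hsi
      rw [hval_i]
      have := hlt_i t hst'
      omega
    by_cases hsj : s = j
    · subst hsj
      rw [hval_j]
      have h1 := hanti hst'.le
      omega
    · rw [hval_other s hsi hsj]
      exact hanti hst'.le
  -- splitting sums/products
  have hjmem : j ∈ (Finset.univ : Finset (Fin d)) := Finset.mem_univ j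
  have himem : i ∈ (Finset.univ : Finset (Fin d)) \ {j} := by
    simp [hij']
  have hsplit : ∀ {M : Type} [inst : AddCommMonoid M] (g : Fin d → M),
      ∑ t, g t = g j + (g i + ∑ t ∈ ((Finset.univ : Finset (Fin d)) \ {j}) \ {i}, g t) := by
    intro M inst g
    rw [← Finset.add_sum_erase _ g hjmem, Finset.erase_eq,
      ← Finset.add_sum_erase _ g himem, Finset.erase_eq]
  have hrest_eq : ∀ {M : Type} (f : Fin d → ℕ → M),
      ∑ t ∈ ((Finset.univ : Finset (Fin d)) \ {j}) \ {i}, 0 = 0 := by intros; simp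
  have hcongr : ∀ t ∈ ((Finset.univ : Finset (Fin d)) \ {j}) \ {i}, ι' t = ι t := by
    intro t ht
    simp only [Finset.mem_sdiff, Finset.mem_singleton] at ht
    exact hval_other t ht.2 ht.1.2
  have hipos : 2 ≤ ι i := by
    rw [hi]; omega
  clear_value ι' i j S T z w
  refine ⟨ι', ⟨hanti', ?_⟩, ?_, ?_⟩
  · -- sum
    rw [hsplit ι', hval_i, hval_j,
      Finset.sum_congr rfl hcongr]
    rw [hsplit ι] at hsum
    show ι j + 1 + (ι i - 1 + ∑ t ∈ ((Finset.univ : Finset (Fin d)) \ {j}) \ {i}, ι t) = k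
    omega
  · -- sum of squares
    rw [hsplit (fun t => ι' t ^ 2)]
    simp only [hval_i, hval_j]
    rw [Finset.sum_congr rfl (fun t ht => by rw [hcongr t ht])]
    rw [hsplit (fun t => ι t ^ 2)]
    have h2 : (ι j + 1) ^ 2 + (ι i - 1) ^ 2 < ι j ^ 2 + ι i ^ 2 := by
      obtain ⟨c, hc⟩ : ∃ c, ι i = c + 1 := ⟨ι i - 1, by omega⟩
      rw [hc]
      simp only [Nat.add_sub_cancel]
      have : ι j + 1 ≤ c := by omega
      nlinarith
    omega
  · -- hgCoeff
    have hprodsplit : ∀ g : Fin d → ℕ,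
        hgCoeff d b g = (ascPochhammer ℝ (g j)).eval (b - (j : ℕ) / 2) *
          ((ascPochhammer ℝ (g i)).eval (b - (i : ℕ) / 2) *
            ∏ t ∈ ((Finset.univ : Finset (Fin d)) \ {j}) \ {i},
              (ascPochhammer ℝ (g t)).eval (b - (t : ℕ) / 2)) := by
      intro g
      unfold hgCoeff
      rw [← Finset.mul_prod_erase _ _ hjmem, Finset.erase_eq,
        ← Finset.mul_prod_erase _ _ himem, Finset.erase_eq]
    rw [hprodsplit ι', hprodsplit ι]
    rw [Finset.prod_congr rfl (fun t ht => by rw [hcongr t ht])]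
    obtain ⟨c, hc⟩ : ∃ c, ι i = c + 1 := ⟨ι i - 1, by omega⟩
    rw [hval_i, hval_j, hc]
    simp only [Nat.add_sub_cancel]
    rw [ascPochhammer_succ_eval, ascPochhammer_succ_eval]
    set Aj := (ascPochhammer ℝ (ι j)).eval (b - (j : ℕ) / 2) with hAj
    set Ac := (ascPochhammer ℝ c).eval (b - (i : ℕ) / 2) with hAc
    set P := ∏ t ∈ ((Finset.univ : Finset (Fin d)) \ {j}) \ {i},
        (ascPochhammer ℝ (ι t)).eval (b - (t : ℕ) / 2) with hP
    have hAjpos : 0 < Aj := ascPochhammer_pos _ _ (base_pos d b hb j)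
    have hAcpos : 0 < Ac := ascPochhammer_pos _ _ (base_pos d b hb i)
    have hPpos : 0 < P := Finset.prod_pos (fun t _ =>
      ascPochhammer_pos _ _ (base_pos d b hb t))
    have hx : (b - (j : ℕ) / 2 + ι j) < (b - (i : ℕ) / 2 + c) := by
      have h1 : (i : ℕ) + 1 ≤ (j : ℕ) := hij
      have h2 : ((i : ℕ) : ℝ) + 1 ≤ ((j : ℕ) : ℝ) := by exact_mod_cast h1
      have h3 : ι j + 1 ≤ c := by omega
      have h4 : ((ι j : ℕ) : ℝ) + 1 ≤ (c : ℝ) := by exact_mod_cast h3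
      linarith
    have hmul := mul_lt_mul_of_pos_left hx (mul_pos (mul_pos hAjpos hAcpos) hPpos)
    calc Aj * (b - (j : ℕ) / 2 + ι j) * (Ac * P)
        = Aj * Ac * P * (b - (j : ℕ) / 2 + ι j) := by ring
      _ < Aj * Ac * P * (b - (i : ℕ) / 2 + c) := hmul
      _ = Aj * (Ac * (b - (i : ℕ) / 2 + c) * P) := by ring

theorem hgCoeff_smallestPartition_min (d : ℕ) (hd : 1 ≤ d) (b : ℝ)
    (hb : ((d : ℝ) - 1) / 2 < b) (k : ℕ) (hk : 1 ≤ k)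
    (ιhat : Fin d → ℕ) (hmin : IsSmallestPartition d k ιhat) :
    0 < hgCoeff d b ιhat ∧
      ∀ ι : Fin d → ℕ, IsPartitionOf d k ι →
        hgCoeff d b ιhat ≤ hgCoeff d b ι ∧
          (ι ≠ ιhat → hgCoeff d b ιhat < hgCoeff d b ι) := by
  classical
  refine ⟨hgCoeff_pos d b hb ιhat, ?_⟩
  have key : ∀ n : ℕ, ∀ ι : Fin d → ℕ, IsPartitionOf d k ι → (∑ t, (ι t) ^ 2) ≤ n →
      hgCoeff d b ιhat ≤ hgCoeff d b ι ∧
        (ι ≠ ιhat → hgCoeff d b ιhat < hgCoeff d b ι) := by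
    intro n
    induction n using Nat.strong_induction_on with
    | _ n IH =>
      intro ι hι hle
      by_cases hcase : ι = ιhat
      · subst hcase
        exact ⟨le_refl _, fun h => absurd rfl h⟩
      · obtain ⟨i0, hlt0, heq0⟩ := hmin.2 ι hι hcase
        -- find j0 > i0 with ι j0 < ιhat j0
        have hsum1 : ∑ t ∈ Finset.univ.filter (fun t => t ≤ i0), ιhat t <
            ∑ t ∈ Finset.univ.filter (fun t => t ≤ i0), ι t := by
          apply Finset.sum_lt_sum
          · intro t ht
            simp only [Finset.mem_filter, Finset.mem_univ, true_and] at ht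
            rcases lt_or_eq_of_le ht with h | h
            · exact (heq0 t h).le
            · subst h; exact hlt0.le
          · exact ⟨i0, by simp, hlt0⟩
        have htot1 : ∑ t ∈ Finset.univ.filter (fun t => t ≤ i0), ιhat t +
            ∑ t ∈ Finset.univ.filter (fun t => ¬ t ≤ i0), ιhat t = k := by
          rw [Finset.sum_filter_add_sum_filter_not]; exact hmin.1.2
        have htot2 : ∑ t ∈ Finset.univ.filter (fun t => t ≤ i0), ι t +
            ∑ t ∈ Finset.univ.filter (fun t => ¬ t ≤ i0), ι t = k := by
          rw [Finset.sum_filter_add_sum_filter_not]; exact hι.2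
        have hsum2 : ∑ t ∈ Finset.univ.filter (fun t => ¬ t ≤ i0), ι t <
            ∑ t ∈ Finset.univ.filter (fun t => ¬ t ≤ i0), ιhat t := by omega
        obtain ⟨j0, hj0mem, hj0lt⟩ := Finset.exists_lt_of_sum_lt hsum2
        simp only [Finset.mem_filter, Finset.mem_univ, true_and, not_le] at hj0mem
        have hgap0 : ι j0 + 2 ≤ ι i0 := by
          have h1 : ιhat j0 ≤ ιhat i0 := hmin.1.1 hj0mem.le
          omega
        have hgap : ι ⟨d - 1, by omega⟩ + 2 ≤ ι ⟨0, by omega⟩ := by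
          have h1 : ι ⟨d - 1, by omega⟩ ≤ ι j0 := hι.1 (by
            simp only [Fin.le_def]; omega)
          have h2 : ι i0 ≤ ι ⟨0, by omega⟩ := hι.1 (by
            simp only [Fin.le_def]; omega)
          omega
        obtain ⟨ι', hι', hmeas, hlt'⟩ := move_lemma d hd b hb k ι hι hgap
        have hres := IH (∑ t, (ι' t) ^ 2) (by omega) ι' hι' le_rfl
        exact ⟨(hres.1.trans hlt'.le), fun _ => lt_of_le_of_lt hres.1 hlt'⟩
  intro ι hι
  exact key (∑ t, (ι t) ^ 2) ι hι le_rfl
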